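/- Let q = p^m and let d_1, ..., d_k ∈ F_q be linearly independent over F_p, with p > k ≥ 1. Choose pairwise distinct nonzero α_1, ..., α_k ∈ F_p, and set d_{k+1} = ∑ α_i d_i and d_{k+2} = ∑ d_i. Then C_D with D = (d_1, ..., d_{k+2}) is a [k+2, k, 3] MDS linear code over F_p. -/

import Mathlib

open scoped BigOperators

def traceCodeSet (p m n : ℕ) [Fact p.Prime] (d : Fin n → GaloisField p m) :
    Set (Fin n → ZMod p) :=
  {v | ∃ x : GaloisField p m,
      v = fun i => Algebra.trace (ZMod p) (GaloisField p m) (x * d i)}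

noncomputable def traceCodeMap (p m n : ℕ) [Fact p.Prime] (d : Fin n → GaloisField p m) :
    GaloisField p m →ₗ[ZMod p] (Fin n → ZMod p) :=
  LinearMap.pi fun i =>
    (Algebra.trace (ZMod p) (GaloisField p m)).comp (LinearMap.mulRight (ZMod p) (d i))

/-- The defining tuple `D = (d₁,…,d_k, ∑ αᵢ dᵢ, ∑ dᵢ)`. -/
noncomputable def mdsTuple (p m k : ℕ) [Fact p.Prime]
    (d : Fin k → GaloisField p m) (α : Fin k → ZMod p) :
    Fin (k + 1 + 1) → GaloisField p m :=
  Fin.snoc (Fin.snoc d (∑ i, algebraMap (ZMod p) (GaloisField p m) (α i) * d i)) (∑ i, d i)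

lemma traceCodeMap_apply (p m n : ℕ) [Fact p.Prime] (d : Fin n → GaloisField p m)
    (x : GaloisField p m) (i : Fin n) :
    traceCodeMap p m n d x i = Algebra.trace (ZMod p) (GaloisField p m) (x * d i) := rfl

lemma traceCodeMap_surjective (p m k : ℕ) [Fact p.Prime]
    (d : Fin k → GaloisField p m) (hli : LinearIndependent (ZMod p) d) :
    Function.Surjective (traceCodeMap p m k d) := by
  have hnd := traceForm_nondegenerate (ZMod p) (GaloisField p m)
  have hsingle : ∀ j : Fin k, ∃ x, traceCodeMap p m k d x = Pi.single j 1 := by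
    intro j
    set s := Submodule.span (ZMod p) (Set.range d)
    let b : Module.Basis (Fin k) (ZMod p) s := Module.Basis.span hli
    obtain ⟨g, hg⟩ := LinearMap.exists_extend (b.coord j)
    obtain ⟨x, hx⟩ := ((Algebra.traceForm (ZMod p) (GaloisField p m)).toDual hnd).surjective g
    refine ⟨x, funext fun i => ?_⟩
    have h1 : traceCodeMap p m k d x i = g (d i) := by
      rw [traceCodeMap_apply, ← hx]; rfl
    have h2 := congrArg (fun f => f (b i)) hg
    simp only [LinearMap.comp_apply, Submodule.subtype_apply, Module.Basis.coord_apply,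
      Module.Basis.repr_self] at h2
    have hbi : (b i : GaloisField p m) = d i := congrArg Subtype.val (Module.Basis.span_apply hli i)
    rw [hbi] at h2
    rw [h1, h2, Finsupp.single_apply, Pi.single_apply]
  rw [← LinearMap.range_eq_top, ← top_le_iff, ← (Pi.basisFun (ZMod p) (Fin k)).span_eq,
    Submodule.span_le]
  rintro _ ⟨j, rfl⟩
  obtain ⟨x, hx⟩ := hsingle j
  exact ⟨x, by simpa using hx⟩

lemma trace_mul_algebraMap (p m : ℕ) [Fact p.Prime] (x y : GaloisField p m) (a : ZMod p) :
    Algebra.trace (ZMod p) (GaloisField p m) (x * (algebraMap (ZMod p) (GaloisField p m) a * y))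
      = a * Algebra.trace (ZMod p) (GaloisField p m) (x * y) := by
  rw [mul_left_comm, Algebra.smul_def a (x * y) |>.symm, map_smul, smul_eq_mul]

lemma trace_mul_sum (p m k : ℕ) [Fact p.Prime] (d : Fin k → GaloisField p m)
    (α : Fin k → ZMod p) (x : GaloisField p m) :
    Algebra.trace (ZMod p) (GaloisField p m)
        (x * ∑ i, algebraMap (ZMod p) (GaloisField p m) (α i) * d i)
      = ∑ i, α i * Algebra.trace (ZMod p) (GaloisField p m) (x * d i) := by
  rw [Finset.mul_sum, map_sum]
  exact Finset.sum_congr rfl fun i _ => trace_mul_algebraMap p m x (d i) (α i)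

/-- With `p > k ≥ 1`, `d₁,…,d_k` linearly independent over `𝔽_p`,
pairwise distinct nonzero `α₁,…,α_k ∈ 𝔽_p`, `d_{k+1} = ∑ αᵢ dᵢ` and `d_{k+2} = ∑ dᵢ`,
the code `C_D` is a `[k+2, k, 3]` MDS linear code over `𝔽_p`. -/
theorem mds_k_plus_two_construction
    (p m k : ℕ) [Fact p.Prime] (hm : 0 < m) (hk : 0 < k) (hkp : k < p)
    (d : Fin k → GaloisField p m) (hli : LinearIndependent (ZMod p) d)
    (α : Fin k → ZMod p) (hα : ∀ i, α i ≠ 0) (hαd : Function.Injective α) :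
    Module.finrank (ZMod p)
        (LinearMap.range (traceCodeMap p m (k + 1 + 1) (mdsTuple p m k d α))) = k ∧
    (∀ c ∈ traceCodeSet p m (k + 1 + 1) (mdsTuple p m k d α), c ≠ 0 → 3 ≤ hammingNorm c) ∧
    (∃ c ∈ traceCodeSet p m (k + 1 + 1) (mdsTuple p m k d α), hammingNorm c = 3) := by
  classical
  set tr := Algebra.trace (ZMod p) (GaloisField p m) with htr
  set D := mdsTuple p m k d α with hD
  set T := traceCodeMap p m (k + 1 + 1) D with hT
  set Φ := traceCodeMap p m k d with hΦ
  have hΦsurj : Function.Surjective Φ := traceCodeMap_surjective p m k d hli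
  -- basic evaluations of D
  have hDin : ∀ i : Fin k, D (Fin.castSucc (Fin.castSucc i)) = d i := by
    intro i
    simp [hD, mdsTuple, Fin.snoc_castSucc]
  have hDmid : D (Fin.castSucc (Fin.last k))
      = ∑ i, algebraMap (ZMod p) (GaloisField p m) (α i) * d i := by
    simp [hD, mdsTuple, Fin.snoc_castSucc, Fin.snoc_last]
  have hDlast : D (Fin.last (k + 1)) = ∑ i, d i := by
    simp [hD, mdsTuple, Fin.snoc_last]
  -- the two dual vectors
  set u : Fin (k + 1 + 1) → ZMod p := Fin.snoc (Fin.snoc α (-1)) 0 with hu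
  set v : Fin (k + 1 + 1) → ZMod p := Fin.snoc (Fin.snoc (fun _ => (1 : ZMod p)) 0) (-1) with hv
  have hu_in : ∀ i : Fin k, u (Fin.castSucc (Fin.castSucc i)) = α i := by
    intro i; simp [hu, Fin.snoc_castSucc]
  have hv_in : ∀ i : Fin k, v (Fin.castSucc (Fin.castSucc i)) = 1 := by
    intro i; simp [hv, Fin.snoc_castSucc]
  have hu_mid : u (Fin.castSucc (Fin.last k)) = -1 := by
    simp [hu, Fin.snoc_castSucc, Fin.snoc_last]
  have hv_mid : v (Fin.castSucc (Fin.last k)) = 0 := by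
    simp [hv, Fin.snoc_castSucc, Fin.snoc_last]
  have hu_last : u (Fin.last (k + 1)) = 0 := by simp [hu, Fin.snoc_last]
  have hv_last : v (Fin.last (k + 1)) = -1 := by simp [hv, Fin.snoc_last]
  have hrel_u : ∀ x : GaloisField p m, ∑ i, u i * tr (x * D i) = 0 := by
    intro x
    rw [Fin.sum_univ_castSucc, Fin.sum_univ_castSucc, hu_last, hu_mid, hDmid,
      trace_mul_sum p m k d α x,
      Finset.sum_congr rfl (fun (i : Fin k) _ => by rw [hu_in i, hDin i])]
    ring
  have hrel_v : ∀ x : GaloisField p m, ∑ i, v i * tr (x * D i) = 0 := by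
    intro x
    rw [Fin.sum_univ_castSucc, Fin.sum_univ_castSucc, hv_last, hv_mid, hDlast,
      Finset.mul_sum, map_sum,
      Finset.sum_congr rfl (fun (i : Fin k) _ => by rw [hv_in i, hDin i, one_mul])]
    ring
  -- the 2x2 determinants are nonzero
  have hdet : ∀ i j : Fin (k + 1 + 1), i ≠ j → u i * v j - u j * v i ≠ 0 := by
    intro i j hij
    induction i using Fin.lastCases with
    | last =>
      induction j using Fin.lastCases with
      | last => exact absurd rfl hij
      | cast j =>
        induction j using Fin.lastCases with
        | last =>
          rw [hu_last, hv_last, hu_mid, hv_mid]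
          simp
        | cast j =>
          rw [hu_last, hv_last, hu_in, hv_in]
          simpa using hα j
    | cast i =>
      induction i using Fin.lastCases with
      | last =>
        induction j using Fin.lastCases with
        | last =>
          rw [hu_last, hv_last, hu_mid, hv_mid]
          simp
        | cast j =>
          induction j using Fin.lastCases with
          | last => exact absurd rfl hij
          | cast j =>
            rw [hu_mid, hv_mid, hu_in, hv_in]
            simp
      | cast i =>
        induction j using Fin.lastCases with
        | last =>
          rw [hu_last, hv_last, hu_in, hv_in]
          simpa using hα i
        | cast j =>
          induction j using Fin.lastCases with
          | last =>
            rw [hu_mid, hv_mid, hu_in, hv_in]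
            simp
          | cast j =>
            rw [hu_in, hv_in, hu_in, hv_in]
            have hne : i ≠ j := by
              intro h; exact hij (by rw [h])
            have hαne : α i ≠ α j := fun h => hne (hαd h)
            simp only [mul_one]
            exact sub_ne_zero.mpr hαne
  refine ⟨?_, ?_, ?_⟩
  · -- rank = k
    have hker : LinearMap.ker T = LinearMap.ker Φ := by
      ext x
      simp only [LinearMap.mem_ker]
      constructor
      · intro h
        funext i
        have := congrFun h (Fin.castSucc (Fin.castSucc i))
        simpa [hT, hΦ, traceCodeMap_apply, hDin i] using this
      · intro h
        have hz : ∀ i : Fin k, tr (x * d i) = 0 := fun i => congrFun h i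
        funext i
        show tr (x * D i) = 0
        induction i using Fin.lastCases with
        | last =>
          rw [hDlast, Finset.mul_sum, map_sum]
          exact Finset.sum_eq_zero fun i _ => hz i
        | cast i =>
          induction i using Fin.lastCases with
          | last =>
            rw [hDmid, trace_mul_sum p m k d α x]
            exact Finset.sum_eq_zero fun i _ => by rw [hz i, mul_zero]
          | cast i => rw [hDin i]; exact hz i
    have h1 := LinearMap.finrank_range_add_finrank_ker T
    have h2 := LinearMap.finrank_range_add_finrank_ker Φ
    have h3 : LinearMap.range Φ = ⊤ := LinearMap.range_eq_top.mpr hΦsurj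
    have h4 : Module.finrank (ZMod p) (LinearMap.range Φ) = k := by
      rw [h3, finrank_top, Module.finrank_pi, Fintype.card_fin]
    rw [hker] at h1
    omega
  · -- minimum distance ≥ 3
    rintro c ⟨x, hcx⟩ hne
    have hc : ∀ i, c i = tr (x * D i) := fun i => congrFun hcx i
    by_contra hlt
    push_neg at hlt
    have hcard : (Finset.univ.filter (fun i => c i ≠ 0)).card ≤ 2 := by
      have : hammingNorm c ≤ 2 := by omega
      simpa [hammingNorm] using this
    obtain ⟨t, hst, htcard⟩ := Finset.exists_superset_card_eq hcard (by
      simp only [Finset.card_univ, Fintype.card_fin]; omega)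
    obtain ⟨a, b, hab, rfl⟩ := Finset.card_eq_two.mp htcard
    have hzero : ∀ i, i ∉ ({a, b} : Finset _) → c i = 0 := by
      intro i hi
      by_contra h
      exact hi (hst (Finset.mem_filter.mpr ⟨Finset.mem_univ i, h⟩))
    have hsum : ∀ w : Fin (k + 1 + 1) → ZMod p, (∑ i, w i * tr (x * D i) = 0) →
        w a * c a + w b * c b = 0 := by
      intro w hw
      have key := Finset.sum_subset (Finset.subset_univ ({a, b} : Finset _))
        (fun i _ hit => show w i * c i = 0 by rw [hzero i hit, mul_zero])
      have htot : ∑ i, w i * c i = 0 := by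
        rw [Finset.sum_congr rfl fun i _ => by rw [hc i]]
        exact hw
      rw [Finset.sum_pair hab, htot] at key
      exact key
    have e1 := hsum u (hrel_u x)
    have e2 := hsum v (hrel_v x)
    have hd := hdet a b hab
    have hca : c a = 0 := by
      have h : (u a * v b - u b * v a) * c a
          = v b * (u a * c a + u b * c b) - u b * (v a * c a + v b * c b) := by ring
      rw [e1, e2, mul_zero, mul_zero, sub_zero] at h
      rcases mul_eq_zero.mp h with h' | h'
      · exact absurd h' hd
      · exact h'
    have hcb : c b = 0 := by
      have h : (u a * v b - u b * v a) * c b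
          = u a * (v a * c a + v b * c b) - v a * (u a * c a + u b * c b) := by ring
      rw [e1, e2, mul_zero, mul_zero, sub_zero] at h
      rcases mul_eq_zero.mp h with h' | h'
      · exact absurd h' hd
      · exact h'
    apply hne
    funext i
    by_cases hi : i ∈ ({a, b} : Finset _)
    · rcases Finset.mem_insert.mp hi with h | h
      · rw [h]; exact hca
      · rw [Finset.mem_singleton.mp h]; exact hcb
    · exact hzero i hi
  · -- a weight-3 codeword exists
    set j0 : Fin k := ⟨0, hk⟩ with hj0
    obtain ⟨x, hx⟩ := hΦsurj (Pi.single j0 1)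
    refine ⟨fun i => tr (x * D i), ⟨x, rfl⟩, ?_⟩
    set c : Fin (k + 1 + 1) → ZMod p := fun i => tr (x * D i) with hc
    have hxd : ∀ i : Fin k, tr (x * d i) = (Pi.single j0 1 : Fin k → ZMod p) i := fun i => congrFun hx i
    have hcin : ∀ i : Fin k, c (Fin.castSucc (Fin.castSucc i)) = (Pi.single j0 1 : Fin k → ZMod p) i := by
      intro i; rw [hc]; simp only [hDin i]; exact hxd i
    have hcmid : c (Fin.castSucc (Fin.last k)) = α j0 := by
      rw [hc]
      simp only [hDmid]
      rw [htr, trace_mul_sum p m k d α x, ← htr]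
      rw [show (∑ i, α i * tr (x * d i)) = ∑ i, α i * (Pi.single j0 1 : Fin k → ZMod p) i from
        Finset.sum_congr rfl fun i _ => by rw [hxd i]]
      simp [Pi.single_apply, mul_ite, Finset.sum_ite_eq']
    have hclast : c (Fin.last (k + 1)) = 1 := by
      rw [hc]
      simp only [hDlast, Finset.mul_sum, map_sum]
      rw [show (∑ i, tr (x * d i)) = ∑ i, (Pi.single j0 1 : Fin k → ZMod p) i from
        Finset.sum_congr rfl fun i _ => hxd i]
      simp [Pi.single_apply, Finset.sum_ite_eq']
    have hham : hammingNorm c = ∑ i, if c i ≠ 0 then 1 else 0 := by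
      simp [hammingNorm, Finset.card_filter]
    rw [hham, Fin.sum_univ_castSucc, Fin.sum_univ_castSucc]
    have hs1 : (∑ i : Fin k, if c (Fin.castSucc (Fin.castSucc i)) ≠ 0 then 1 else 0) = 1 := by
      rw [show (∑ i : Fin k, if c (Fin.castSucc (Fin.castSucc i)) ≠ 0 then 1 else 0)
          = ∑ i : Fin k, if i = j0 then 1 else 0 from Finset.sum_congr rfl fun i _ => by
        rw [hcin i, Pi.single_apply]
        by_cases h : i = j0 <;> simp [h]]
      simp [Finset.sum_ite_eq']
    rw [hs1, hcmid, hclast]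
    simp [hα j0]
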